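/- Let n ≥ 2, let M and N be n×n real matrices (viewed as acting on ℂⁿ), let ρ ∈ ℝ and let ε₁, …, ε_{n−1} be reals. Let z : ℝ → ℂⁿ be differentiable and satisfy z′(t) + iρ M z(t) + N z(t) = 0 for all t. Define I(t) := Σ_{k=1}^{n−1} ε_k Im⟨N M^{k−1} z(t), N M^k z(t)⟩, where ⟨u, v⟩ := Σ_j u_j \overline{v_j} is the Hermitian inner product on ℂⁿ. Then for every t, I′(t) + Σ_{k=1}^{n−1} ε_k ρ |N M^k z(t)|² = ρ Σ_{k=1}^{n−1} ε_k Re⟨N M^{k−1} z(t), N M^{k+1} z(t)⟩ − Σ_{k=1}^{n−1} ε_k Im⟨N M^{k−1} N z(t), N M^k z(t)⟩ − Σ_{k=1}^{n−1} ε_k Im⟨N M^{k−1} z(t), N M^k N z(t)⟩. -/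

import Mathlib

noncomputable def herm {n : ℕ} (u v : Fin n → ℂ) : ℂ :=
  ∑ j, u j * (starRingEnd ℂ) (v j)

noncomputable def cm {n : ℕ} (M : Matrix (Fin n) (Fin n) ℝ) :
    Matrix (Fin n) (Fin n) ℂ :=
  M.map Complex.ofReal

lemma herm_add_left {n : ℕ} (u w v : Fin n → ℂ) :
    herm (u + w) v = herm u v + herm w v := by
  simp [herm, add_mul, Finset.sum_add_distrib]

lemma herm_smul_left {n : ℕ} (c : ℂ) (u v : Fin n → ℂ) :
    herm (c • u) v = c * herm u v := by
  simp [herm, Finset.mul_sum, mul_assoc]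

lemma herm_neg_left {n : ℕ} (u v : Fin n → ℂ) : herm (-u) v = -herm u v := by
  simp [herm]

lemma herm_add_right {n : ℕ} (u v w : Fin n → ℂ) :
    herm u (v + w) = herm u v + herm u w := by
  simp [herm, mul_add, Finset.sum_add_distrib]

lemma herm_smul_right {n : ℕ} (c : ℂ) (u v : Fin n → ℂ) :
    herm u (c • v) = (starRingEnd ℂ) c * herm u v := by
  simp only [herm, Pi.smul_apply, smul_eq_mul, map_mul, Finset.mul_sum]
  exact Finset.sum_congr rfl fun _ _ => by ring

lemma herm_neg_right {n : ℕ} (u v : Fin n → ℂ) : herm u (-v) = -herm u v := by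
  simp [herm]

lemma key_deriv {n : ℕ} (A B : Matrix (Fin n) (Fin n) ℂ) (z z' : ℝ → Fin n → ℂ)
    (t : ℝ) (hz : HasDerivAt z (z' t) t) :
    HasDerivAt (fun s => (herm (A.mulVec (z s)) (B.mulVec (z s))).im)
      ((herm (A.mulVec (z' t)) (B.mulVec (z t))
        + herm (A.mulVec (z t)) (B.mulVec (z' t))).im) t := by
  have hcomp : ∀ l, HasDerivAt (fun s => z s l) (z' t l) t := hasDerivAt_pi.mp hz
  have hmv : ∀ (C : Matrix (Fin n) (Fin n) ℂ) (j : Fin n),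
      HasDerivAt (fun s => C.mulVec (z s) j) (C.mulVec (z' t) j) t := by
    intro C j
    simp only [Matrix.mulVec, dotProduct]
    exact HasDerivAt.fun_sum (fun l _ => (hcomp l).const_mul (C j l))
  have hconj : ∀ (C : Matrix (Fin n) (Fin n) ℂ) (j : Fin n),
      HasDerivAt (fun s => (starRingEnd ℂ) (C.mulVec (z s) j))
        ((starRingEnd ℂ) (C.mulVec (z' t) j)) t := by
    intro C j
    exact (Complex.conjCLE.toContinuousLinearMap.hasFDerivAt.comp_hasDerivAt t (hmv C j))
  have hherm : HasDerivAt (fun s => herm (A.mulVec (z s)) (B.mulVec (z s)))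
      (herm (A.mulVec (z' t)) (B.mulVec (z t))
        + herm (A.mulVec (z t)) (B.mulVec (z' t))) t := by
    simp only [herm, ← Finset.sum_add_distrib]
    exact HasDerivAt.fun_sum (fun j _ => (hmv A j).mul (hconj B j))
  exact Complex.imCLM.hasFDerivAt.comp_hasDerivAt t hherm

theorem stmt10 (n : ℕ) (hn : 2 ≤ n) (M N : Matrix (Fin n) (Fin n) ℝ)
    (ρ : ℝ) (ε : ℕ → ℝ)
    (z z' : ℝ → Fin n → ℂ)
    (hz : ∀ t, HasDerivAt z (z' t) t)
    (heq : ∀ t, z' t + (Complex.I * (ρ : ℂ)) • (cm M).mulVec (z t)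
        + (cm N).mulVec (z t) = 0) :
    ∀ t : ℝ, HasDerivAt
      (fun s => ∑ k ∈ Finset.Ico 1 n, ε k *
        (herm ((cm N * cm M ^ (k - 1)).mulVec (z s))
              ((cm N * cm M ^ k).mulVec (z s))).im)
      (-(∑ k ∈ Finset.Ico 1 n, ε k * ρ *
          (herm ((cm N * cm M ^ k).mulVec (z t))
                ((cm N * cm M ^ k).mulVec (z t))).re)
        + ρ * ∑ k ∈ Finset.Ico 1 n, ε k *
            (herm ((cm N * cm M ^ (k - 1)).mulVec (z t))
                  ((cm N * cm M ^ (k + 1)).mulVec (z t))).re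
        - ∑ k ∈ Finset.Ico 1 n, ε k *
            (herm ((cm N * cm M ^ (k - 1) * cm N).mulVec (z t))
                  ((cm N * cm M ^ k).mulVec (z t))).im
        - ∑ k ∈ Finset.Ico 1 n, ε k *
            (herm ((cm N * cm M ^ (k - 1)).mulVec (z t))
                  ((cm N * cm M ^ k * cm N).mulVec (z t))).im) t := by
  intro t
  have hz' : z' t = -((Complex.I * (ρ : ℂ)) • (cm M).mulVec (z t)) - (cm N).mulVec (z t) := by
    have h := heq t
    linear_combination (norm := module) h
  -- per-k derivative
  have hk : ∀ k ∈ Finset.Ico 1 n, HasDerivAt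
      (fun s => ε k * (herm ((cm N * cm M ^ (k - 1)).mulVec (z s))
              ((cm N * cm M ^ k).mulVec (z s))).im)
      (ε k * (-(ρ * (herm ((cm N * cm M ^ k).mulVec (z t))
                ((cm N * cm M ^ k).mulVec (z t))).re)
        + ρ * (herm ((cm N * cm M ^ (k - 1)).mulVec (z t))
                  ((cm N * cm M ^ (k + 1)).mulVec (z t))).re
        - (herm ((cm N * cm M ^ (k - 1) * cm N).mulVec (z t))
                  ((cm N * cm M ^ k).mulVec (z t))).im
        - (herm ((cm N * cm M ^ (k - 1)).mulVec (z t))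
                  ((cm N * cm M ^ k * cm N).mulVec (z t))).im)) t := by
    intro k hk
    have hk1 : 1 ≤ k := (Finset.mem_Ico.mp hk).1
    have hpow : cm M ^ (k - 1) * cm M = cm M ^ k := by
      rw [← pow_succ, Nat.sub_add_cancel hk1]
    have hder := (key_deriv (cm N * cm M ^ (k - 1)) (cm N * cm M ^ k) z z' t (hz t)).const_mul (ε k)
    refine hder.congr_deriv ?_
    rw [hz']
    simp only [Matrix.mulVec_sub, Matrix.mulVec_add, Matrix.mulVec_neg, Matrix.mulVec_smul,
      Matrix.mulVec_mulVec, sub_eq_add_neg, herm_add_left, herm_add_right, herm_neg_left,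
      herm_neg_right, herm_smul_left, herm_smul_right]
    rw [mul_assoc (cm N) (cm M ^ (k-1)) (cm M), hpow,
        mul_assoc (cm N) (cm M ^ k) (cm M), ← pow_succ]
    simp only [Complex.add_im, Complex.neg_im, Complex.mul_im, Complex.mul_re,
      Complex.I_re, Complex.I_im, Complex.neg_re, Complex.neg_im, Complex.ofReal_re, Complex.ofReal_im,
      map_mul, Complex.conj_I, Complex.conj_ofReal]
    ring
  have hsum := HasDerivAt.fun_sum hk
  refine hsum.congr_deriv ?_
  rw [Finset.mul_sum, ← Finset.sum_neg_distrib, ← Finset.sum_add_distrib,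
    ← Finset.sum_sub_distrib, ← Finset.sum_sub_distrib]
  exact Finset.sum_congr rfl (fun k _ => by ring)
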